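/- arXiv:1608.08597 — 4 statements merged into one kernel-verified Lean document; each statement's English description precedes it below -/
import Mathlib

section
/- Let Q ∈ ℝ^{n×n} and let x be a trajectory of the switched system. Then for every i = 0, …, N, ∫_{τ_i}^{τ_{i+1}} x(t)ᵀ Q x(t) dt = x_iᵀ M_i x_i. -/
open Matrix

/-- Matrix exponential of a real square matrix. -/
noncomputable def expM {n : ℕ} (A : Matrix (Fin n) (Fin n) ℝ) : Matrix (Fin n) (Fin n) ℝ :=
  NormedSpace.exp A

/-- Switching times: `tau δ i = ∑_{j<i} δ j`. -/
noncomputable def tau (δ : ℕ → ℝ) (i : ℕ) : ℝ := ∑ j ∈ Finset.range i, δ j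

/-- State transition matrix `Φ(l, i) = exp(δ_{l-1} A_{l-1}) ⋯ exp(δ_i A_i)`
(ordered product, larger indices on the left; `Φ(i,i) = 1`). -/
noncomputable def Phi {n : ℕ} (A : ℕ → Matrix (Fin n) (Fin n) ℝ) (δ : ℕ → ℝ)
    (l i : ℕ) : Matrix (Fin n) (Fin n) ℝ :=
  (((List.range (l - i)).reverse).map (fun p => expM (δ (i + p) • A (i + p)))).prod

/-- `M_q = ∫_0^{δ_q} exp(η A_q)ᵀ Q exp(η A_q) dη`, taken entrywise. -/
noncomputable def Mmat {n : ℕ} (A : ℕ → Matrix (Fin n) (Fin n) ℝ) (δ : ℕ → ℝ)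
    (Q : Matrix (Fin n) (Fin n) ℝ) (q : ℕ) : Matrix (Fin n) (Fin n) ℝ :=
  Matrix.of fun k l => ∫ η in (0:ℝ)..δ q, ((expM (η • A q))ᵀ * Q * expM (η • A q)) k l

/-- `P_a = ∑_{q=a}^N Φ(q,a)ᵀ M_q Φ(q,a)`. -/
noncomputable def Pmat {n : ℕ} (N : ℕ) (A : ℕ → Matrix (Fin n) (Fin n) ℝ) (δ : ℕ → ℝ)
    (Q : Matrix (Fin n) (Fin n) ℝ) (a : ℕ) : Matrix (Fin n) (Fin n) ℝ :=
  ∑ q ∈ Finset.Icc a N, (Phi A δ q a)ᵀ * Mmat A δ Q q * Phi A δ q a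

/-- `F_a = Φ(N+1,a)ᵀ E Φ(N+1,a)`. -/
noncomputable def Fmat {n : ℕ} (N : ℕ) (A : ℕ → Matrix (Fin n) (Fin n) ℝ) (δ : ℕ → ℝ)
    (E : Matrix (Fin n) (Fin n) ℝ) (a : ℕ) : Matrix (Fin n) (Fin n) ℝ :=
  (Phi A δ (N + 1) a)ᵀ * E * Phi A δ (N + 1) a

/-- `S_a = P_a + F_a`. -/
noncomputable def Smat {n : ℕ} (N : ℕ) (A : ℕ → Matrix (Fin n) (Fin n) ℝ) (δ : ℕ → ℝ)
    (Q E : Matrix (Fin n) (Fin n) ℝ) (a : ℕ) : Matrix (Fin n) (Fin n) ℝ :=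
  Pmat N A δ Q a + Fmat N A δ E a

/-- A trajectory of the switched system: continuous on `[0, τ_{N+1}]`, starting at `x0`,
satisfying `x' = A_i x` on each open interval `(τ_i, τ_{i+1})`. -/
def IsTrajectory {n : ℕ} (N : ℕ) (A : ℕ → Matrix (Fin n) (Fin n) ℝ) (δ : ℕ → ℝ)
    (x0 : Fin n → ℝ) (x : ℝ → Fin n → ℝ) : Prop :=
  ContinuousOn x (Set.Icc 0 (tau δ (N + 1))) ∧ x 0 = x0 ∧
    ∀ i ≤ N, ∀ t ∈ Set.Ioo (tau δ i) (tau δ (i + 1)),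
      HasDerivAt x ((A i).mulVec (x t)) t

/-! ### Auxiliary machinery -/

open Set Filter Topology

attribute [local instance] Matrix.linftyOpNormedRing Matrix.linftyOpNormedAlgebra

noncomputable def entryCLM {n : ℕ} (k l : Fin n) : Matrix (Fin n) (Fin n) ℝ →L[ℝ] ℝ :=
  LinearMap.toContinuousLinearMap
    { toFun := fun M => M k l
      map_add' := fun _ _ => rfl
      map_smul' := fun _ _ => rfl }

lemma hasDerivAt_entry {n : ℕ} {f : ℝ → Matrix (Fin n) (Fin n) ℝ}
    {f' : Matrix (Fin n) (Fin n) ℝ} {t : ℝ} (h : HasDerivAt f f' t) (k l : Fin n) :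
    HasDerivAt (fun t => f t k l) (f' k l) t :=
  ((entryCLM k l).hasFDerivAt.comp_hasDerivAt t h)

lemma expM_add_smul {n : ℕ} (A : Matrix (Fin n) (Fin n) ℝ) (s t : ℝ) :
    expM (s • A) * expM (t • A) = expM ((s + t) • A) := by
  rw [expM, expM, expM, add_smul]
  exact (NormedSpace.exp_add_of_commute (((Commute.refl A).smul_left s).smul_right t)).symm

lemma hasDerivAt_expM {n : ℕ} (A : Matrix (Fin n) (Fin n) ℝ) (t : ℝ) :
    HasDerivAt (fun u : ℝ => expM (u • A)) (expM (t • A) * A) t :=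
  hasDerivAt_exp_smul_const A t

lemma continuous_expM_entry {n : ℕ} (A : Matrix (Fin n) (Fin n) ℝ) (k l : Fin n) :
    Continuous (fun t : ℝ => expM (t • A) k l) :=
  continuous_iff_continuousAt.mpr fun t =>
    (hasDerivAt_entry (hasDerivAt_expM A t) k l).continuousAt

lemma hasDerivAt_expM_rev {n : ℕ} (A : Matrix (Fin n) (Fin n) ℝ) (a t : ℝ) :
    HasDerivAt (fun t : ℝ => expM ((a - t) • A)) (-(expM ((a - t) • A) * A)) t := by
  have h1 : HasDerivAt (fun u : ℝ => expM (u • A)) (expM ((a - t) • A) * A) (a - t) :=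
    hasDerivAt_exp_smul_const A (a - t)
  have h2 : HasDerivAt (fun t : ℝ => a - t) (-1) t := by
    simpa using (hasDerivAt_id t).const_sub a
  have := h1.scomp t h2
  rw [neg_one_smul] at this
  exact this

/-- constancy on Icc from deriv zero on Ioo + continuity -/
lemma const_of_deriv_zero_Ioo {E : Type*} [NormedAddCommGroup E] [NormedSpace ℝ E]
    (f : ℝ → E) (a b : ℝ) (hab : a < b)
    (hc : ContinuousOn f (Icc a b)) (hd : ∀ t ∈ Ioo a b, HasDerivAt f 0 t) :
    ∀ t ∈ Icc a b, f t = f a := by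
  set m := (a + b) / 2 with hm
  have hmI : m ∈ Ioo a b := ⟨by linarith, by linarith⟩
  have key : ∀ t ∈ Ioo a b, f t = f m := by
    intro t ht
    rcases le_total m t with h | h
    · have : ∀ s ∈ Icc m t, f s = f m := by
        apply constant_of_has_deriv_right_zero
        · exact fun s hs => ((hd s ⟨lt_of_lt_of_le hmI.1 hs.1,
            lt_of_le_of_lt hs.2 ht.2⟩).continuousAt).continuousWithinAt
        · exact fun s hs => (hd s ⟨lt_of_lt_of_le hmI.1 hs.1,
            lt_trans hs.2 ht.2⟩).hasDerivWithinAt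
      exact this t ⟨h, le_refl t⟩
    · have : ∀ s ∈ Icc t m, f s = f t := by
        apply constant_of_has_deriv_right_zero
        · exact fun s hs => ((hd s ⟨lt_of_lt_of_le ht.1 hs.1,
            lt_of_le_of_lt hs.2 hmI.2⟩).continuousAt).continuousWithinAt
        · exact fun s hs => (hd s ⟨lt_of_lt_of_le ht.1 hs.1,
            lt_trans hs.2 hmI.2⟩).hasDerivWithinAt
      exact (this m ⟨h, le_refl m⟩).symm
  have endpt : ∀ c ∈ Icc a b, c ∈ closure (Ioo a b) → f c = f m := by
    intro c hcI hcc
    have h1 : Tendsto f (𝓝[Ioo a b] c) (𝓝 (f c)) := ((hc c hcI).mono Ioo_subset_Icc_self)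
    have h2 : Tendsto f (𝓝[Ioo a b] c) (𝓝 (f m)) := by
      apply Tendsto.congr' _ tendsto_const_nhds
      filter_upwards [self_mem_nhdsWithin] with s hs using (key s hs).symm
    have : (𝓝[Ioo a b] c).NeBot := mem_closure_iff_nhdsWithin_neBot.mp hcc
    exact tendsto_nhds_unique h1 h2
  have hcl : ∀ c ∈ Icc a b, c ∈ closure (Ioo a b) := by
    intro c hcI; rw [closure_Ioo (ne_of_lt hab)]; exact hcI
  intro t ht
  rw [endpt t ht (hcl t ht),
    ← endpt a ⟨le_refl a, le_of_lt hab⟩ (hcl a ⟨le_refl a, le_of_lt hab⟩)]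

/-- Key: solution formula on an interval -/
lemma sol_formula {n : ℕ} (A : Matrix (Fin n) (Fin n) ℝ) {a d : ℝ} (hd : 0 ≤ d)
    (x : ℝ → Fin n → ℝ)
    (hc : ContinuousOn x (Icc a (a + d)))
    (hder : ∀ t ∈ Ioo a (a + d), HasDerivAt x (A.mulVec (x t)) t) :
    ∀ t ∈ Icc a (a + d), x t = (expM ((t - a) • A)).mulVec (x a) := by
  rcases eq_or_lt_of_le hd with rfl | hd'
  · intro t ht
    have : t = a := le_antisymm (by simpa using ht.2) (by simpa using ht.1)
    subst this
    simp [expM, NormedSpace.exp_zero]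
  have hab : a < a + d := by linarith
  set E : ℝ → Matrix (Fin n) (Fin n) ℝ := fun t => expM ((a - t) • A) with hE
  have hEder : ∀ t : ℝ, HasDerivAt E (-(E t * A)) t := fun t => hasDerivAt_expM_rev A a t
  have hEcont : ∀ k l, Continuous (fun t => E t k l) := by
    intro k l
    exact continuous_iff_continuousAt.mpr fun t =>
      (hasDerivAt_entry (hEder t) k l).continuousAt
  set y : ℝ → Fin n → ℝ := fun t => (E t).mulVec (x t) with hy
  have hyc : ContinuousOn y (Icc a (a + d)) := by
    rw [continuousOn_pi]
    intro k
    have : ∀ t, y t k = ∑ l, E t k l * x t l := fun t => rfl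
    simp only [this]
    exact continuousOn_finset_sum _ fun l _ =>
      ((hEcont k l).continuousOn).mul ((continuousOn_pi.mp hc) l)
  have hyder : ∀ t ∈ Ioo a (a + d), HasDerivAt y 0 t := by
    intro t ht
    rw [hasDerivAt_pi]
    intro k
    have hxl : ∀ l, HasDerivAt (fun t => x t l) ((A.mulVec (x t)) l) t :=
      fun l => hasDerivAt_pi.mp (hder t ht) l
    have hcomp : HasDerivAt (fun t => ∑ l, E t k l * x t l)
        (∑ l, ((-(E t * A)) k l * x t l + E t k l * ((A.mulVec (x t)) l))) t :=
      HasDerivAt.fun_sum fun l _ =>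
        (hasDerivAt_entry (hEder t) k l).mul (hxl l)
    have hzero : (∑ l, ((-(E t * A)) k l * x t l + E t k l * ((A.mulVec (x t)) l))) = 0 := by
      rw [Finset.sum_add_distrib]
      have h1 : ∑ l, (-(E t * A)) k l * x t l = ((-(E t * A)).mulVec (x t)) k := rfl
      have h2 : ∑ l, E t k l * ((A.mulVec (x t)) l) = ((E t).mulVec (A.mulVec (x t))) k := rfl
      rw [h1, h2, mulVec_mulVec, neg_mulVec]
      simp
    have : HasDerivAt (fun t => ∑ l, E t k l * x t l) 0 t := hzero ▸ hcomp
    exact this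
  have hconst : ∀ t ∈ Icc a (a + d), y t = y a :=
    const_of_deriv_zero_Ioo y a (a + d) hab hyc hyder
  intro t ht
  have hya : y a = x a := by
    simp only [hy, hE, sub_self, zero_smul, expM, NormedSpace.exp_zero, one_mulVec]
  have := hconst t ht
  have hinv : expM ((t - a) • A) * E t = 1 := by
    rw [hE, expM_add_smul]
    simp [expM, NormedSpace.exp_zero]
  calc x t = (expM ((t - a) • A) * E t).mulVec (x t) := by rw [hinv, one_mulVec]
    _ = (expM ((t - a) • A)).mulVec (y t) := by rw [← mulVec_mulVec]
    _ = (expM ((t - a) • A)).mulVec (x a) := by rw [this, hya]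

lemma tau_zero (δ : ℕ → ℝ) : tau δ 0 = 0 := by simp [tau]

lemma tau_succ (δ : ℕ → ℝ) (i : ℕ) : tau δ (i + 1) = tau δ i + δ i :=
  Finset.sum_range_succ δ i

lemma tau_mono {N : ℕ} {δ : ℕ → ℝ} (hδ : ∀ q ≤ N, 0 ≤ δ q) {j k : ℕ}
    (hjk : j ≤ k) (hk : k ≤ N + 1) : tau δ j ≤ tau δ k := by
  apply Finset.sum_le_sum_of_subset_of_nonneg (Finset.range_subset_range.mpr hjk)
  intro q hq _
  exact hδ q (by have := Finset.mem_range.mp hq; omega)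

lemma Phi_succ_zero {n : ℕ} (A : ℕ → Matrix (Fin n) (Fin n) ℝ) (δ : ℕ → ℝ) (i : ℕ) :
    Phi A δ (i + 1) 0 = expM (δ i • A i) * Phi A δ i 0 := by
  simp [Phi, List.range_succ]

lemma Phi_zero_zero {n : ℕ} (A : ℕ → Matrix (Fin n) (Fin n) ℝ) (δ : ℕ → ℝ) :
    Phi A δ 0 0 = 1 := by simp [Phi]

lemma x_at_tau {n N : ℕ} (A : ℕ → Matrix (Fin n) (Fin n) ℝ) (δ : ℕ → ℝ)
    (hδ : ∀ q ≤ N, 0 ≤ δ q) (x0 : Fin n → ℝ) (x : ℝ → Fin n → ℝ)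
    (hx : IsTrajectory N A δ x0 x) :
    ∀ i ≤ N + 1, x (tau δ i) = (Phi A δ i 0).mulVec x0 := by
  obtain ⟨hxc, hx0, hxd⟩ := hx
  intro i
  induction i with
  | zero => intro _; rw [tau_zero, Phi_zero_zero, one_mulVec, hx0]
  | succ i ih =>
    intro h
    have hi : i ≤ N := by omega
    have hd : 0 ≤ δ i := hδ i hi
    have hsub : Icc (tau δ i) (tau δ i + δ i) ⊆ Icc 0 (tau δ (N + 1)) := by
      intro t ht
      constructor
      · calc (0:ℝ) = tau δ 0 := (tau_zero δ).symm
          _ ≤ tau δ i := tau_mono hδ (Nat.zero_le i) (by omega)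
          _ ≤ t := ht.1
      · calc t ≤ tau δ i + δ i := ht.2
          _ = tau δ (i + 1) := (tau_succ δ i).symm
          _ ≤ tau δ (N + 1) := tau_mono hδ (by omega) le_rfl
    have hder : ∀ t ∈ Ioo (tau δ i) (tau δ i + δ i), HasDerivAt x ((A i).mulVec (x t)) t := by
      intro t ht
      exact hxd i hi t (by rwa [tau_succ δ i])
    have := sol_formula (A i) hd x (hxc.mono hsub) hder (tau δ i + δ i)
      ⟨by linarith, le_rfl⟩
    rw [tau_succ δ i, this, ih (by omega), Phi_succ_zero, ← mulVec_mulVec,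
      add_sub_cancel_left]

lemma bilin_eq {n : ℕ} (B Q : Matrix (Fin n) (Fin n) ℝ) (v : Fin n → ℝ) :
    (B.mulVec v) ⬝ᵥ Q.mulVec (B.mulVec v) = v ⬝ᵥ (Bᵀ * Q * B).mulVec v := by
  rw [← mulVec_mulVec, ← mulVec_mulVec, dotProduct_mulVec v, vecMul_transpose]

lemma continuous_C_entry {n : ℕ} (A Q : Matrix (Fin n) (Fin n) ℝ) (k l : Fin n) :
    Continuous (fun η : ℝ => ((expM (η • A))ᵀ * Q * expM (η • A)) k l) := by
  simp only [Matrix.mul_apply, Matrix.transpose_apply]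
  exact continuous_finset_sum _ fun j _ =>
    (continuous_finset_sum _ fun m _ =>
      (continuous_expM_entry A m k).mul continuous_const).mul (continuous_expM_entry A j l)

/-- `∫_{τ_i}^{τ_{i+1}} x(t)ᵀ Q x(t) dt = x_iᵀ M_i x_i` for every `i = 0, …, N`. -/
theorem stmt1 {n N : ℕ} (A : ℕ → Matrix (Fin n) (Fin n) ℝ) (δ : ℕ → ℝ)
    (hδ : ∀ q ≤ N, 0 ≤ δ q) (Q : Matrix (Fin n) (Fin n) ℝ)
    (x0 : Fin n → ℝ) (x : ℝ → Fin n → ℝ) (hx : IsTrajectory N A δ x0 x) :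
    ∀ i ≤ N,
      (∫ t in tau δ i..tau δ (i + 1), x t ⬝ᵥ Q.mulVec (x t)) =
        ((Phi A δ i 0).mulVec x0) ⬝ᵥ (Mmat A δ Q i).mulVec ((Phi A δ i 0).mulVec x0) := by
  intro i hi
  obtain ⟨hxc, hx0, hxd⟩ := hx
  set a := tau δ i with ha
  set d := δ i with hdd
  have hd : 0 ≤ d := hδ i hi
  have hstep : tau δ (i + 1) = a + d := tau_succ δ i
  set v := (Phi A δ i 0).mulVec x0 with hv
  have hxa : x a = v := x_at_tau A δ hδ x0 x ⟨hxc, hx0, hxd⟩ i (by omega)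
  have hsub : Icc a (a + d) ⊆ Icc 0 (tau δ (N + 1)) := by
    intro t ht
    constructor
    · calc (0:ℝ) = tau δ 0 := (tau_zero δ).symm
        _ ≤ a := tau_mono hδ (Nat.zero_le i) (by omega)
        _ ≤ t := ht.1
    · calc t ≤ a + d := ht.2
        _ = tau δ (i + 1) := hstep.symm
        _ ≤ tau δ (N + 1) := tau_mono hδ (by omega) le_rfl
  have hder : ∀ t ∈ Ioo a (a + d), HasDerivAt x ((A i).mulVec (x t)) t := by
    intro t ht
    exact hxd i hi t (by rwa [hstep])
  have hsol : ∀ t ∈ Icc a (a + d), x t = (expM ((t - a) • A i)).mulVec v := by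
    intro t ht
    rw [← hxa]
    exact sol_formula (A i) hd x (hxc.mono hsub) hder t ht
  set C : ℝ → Matrix (Fin n) (Fin n) ℝ :=
    fun η => (expM (η • A i))ᵀ * Q * expM (η • A i) with hC
  -- change of variables
  have hcv : (∫ t in a..(a + d), x t ⬝ᵥ Q.mulVec (x t)) =
      ∫ η in (0:ℝ)..d, (x (a + η)) ⬝ᵥ Q.mulVec (x (a + η)) := by
    have := intervalIntegral.integral_comp_add_left
      (a := (0:ℝ)) (b := d) (fun t => x t ⬝ᵥ Q.mulVec (x t)) a
    rw [this, add_zero]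
  have hcongr : (∫ η in (0:ℝ)..d, (x (a + η)) ⬝ᵥ Q.mulVec (x (a + η))) =
      ∫ η in (0:ℝ)..d, v ⬝ᵥ (C η).mulVec v := by
    apply intervalIntegral.integral_congr
    intro η hη
    rw [uIcc_of_le hd] at hη
    have haη : a + η ∈ Icc a (a + d) := ⟨by linarith [hη.1], by linarith [hη.2]⟩
    show x (a + η) ⬝ᵥ Q.mulVec (x (a + η)) = v ⬝ᵥ (C η).mulVec v
    rw [hsol (a + η) haη, add_sub_cancel_left, bilin_eq]
  -- final: the integral of entries
  have hint : (∫ η in (0:ℝ)..d, v ⬝ᵥ (C η).mulVec v) = v ⬝ᵥ (Mmat A δ Q i).mulVec v := by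
    have hexp : (fun η : ℝ => v ⬝ᵥ (C η).mulVec v) =
        fun η => ∑ k, ∑ l, v k * (C η k l * v l) := by
      funext η
      simp [dotProduct, mulVec, Finset.mul_sum]
    rw [hexp]
    have hCc : ∀ k l, Continuous fun η : ℝ => C η k l := fun k l =>
      continuous_C_entry (A i) Q k l
    rw [intervalIntegral.integral_finset_sum]
    · have : ∀ k ∈ Finset.univ, (∫ η in (0:ℝ)..d, ∑ l, v k * (C η k l * v l)) =
          ∑ l, v k * ((∫ η in (0:ℝ)..d, C η k l) * v l) := by
        intro k _
        rw [intervalIntegral.integral_finset_sum]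
        · apply Finset.sum_congr rfl
          intro l _
          rw [intervalIntegral.integral_const_mul, intervalIntegral.integral_mul_const]
        · exact fun l _ =>
            ((continuous_const.mul ((hCc k l).mul continuous_const)).intervalIntegrable _ _)
      rw [Finset.sum_congr rfl this]
      simp only [dotProduct, mulVec, Mmat, Matrix.of_apply, Finset.mul_sum]
      rfl
    · exact fun k _ => (continuous_finset_sum _ fun l _ =>
        continuous_const.mul ((hCc k l).mul continuous_const)).intervalIntegrable _ _
  rw [hstep, hcv, hcongr, hint]
end

section
/- Fix Q ∈ ℝ^{n×n} and indices 0 ≤ a ≤ i ≤ N, and regard P_a as a function of δ ∈ ℝ^{N+1} through the defining formulas. Then the partial derivative of P_a with respect to δ_i exists at every δ with nonnegative entries and equals Φ(i+1, a)ᵀ (Q + A_iᵀ P_{i+1} + P_{i+1} A_i) Φ(i+1, a), where Φ(i+1, a) and P_{i+1} are evaluated at δ. -/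
open Matrix

section Aux

attribute [local instance] Matrix.linftyOpNormedRing Matrix.linftyOpNormedAlgebra

variable {n : ℕ}

/-- `Phi` only depends on `δ` at indices in `[i, l)`. -/
lemma Phi_congr (A : ℕ → Matrix (Fin n) (Fin n) ℝ) {δ δ' : ℕ → ℝ} (l i : ℕ)
    (h : ∀ p, i ≤ p → p < l → δ p = δ' p) : Phi A δ l i = Phi A δ' l i := by
  unfold Phi
  congr 1
  apply List.map_congr_left
  intro p hp
  rw [List.mem_reverse, List.mem_range] at hp
  rw [h (i + p) (Nat.le_add_right _ _) (by omega)]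

lemma Phi_update_low (A : ℕ → Matrix (Fin n) (Fin n) ℝ) (δ : ℕ → ℝ) (i : ℕ) (s : ℝ)
    {l m : ℕ} (hl : l ≤ i) : Phi A (Function.update δ i s) l m = Phi A δ l m :=
  Phi_congr A l m fun p _ hpl => Function.update_of_ne (by omega) _ _

lemma Phi_update_high (A : ℕ → Matrix (Fin n) (Fin n) ℝ) (δ : ℕ → ℝ) (i : ℕ) (s : ℝ)
    {l m : ℕ} (hm : i < m) : Phi A (Function.update δ i s) l m = Phi A δ l m :=
  Phi_congr A l m fun p hmp _ => Function.update_of_ne (by omega) _ _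

/-- Splitting of the transition matrix. -/
lemma Phi_split (A : ℕ → Matrix (Fin n) (Fin n) ℝ) (δ : ℕ → ℝ) {q m a : ℕ}
    (ham : a ≤ m) (hmq : m ≤ q) : Phi A δ q a = Phi A δ q m * Phi A δ m a := by
  unfold Phi
  have h1 : q - a = (m - a) + (q - m) := by omega
  rw [h1, List.range_add, List.reverse_append, List.map_append, List.prod_append]
  congr 1
  rw [← List.map_reverse, List.map_map]
  congr 1
  apply List.map_congr_left
  intro p hp
  simp only [Function.comp_apply]
  rw [show a + (m - a + p) = m + p by omega]

lemma Phi_succ (A : ℕ → Matrix (Fin n) (Fin n) ℝ) (δ : ℕ → ℝ) (i : ℕ) :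
    Phi A δ (i + 1) i = expM (δ i • A i) := by
  unfold Phi
  have : i + 1 - i = 1 := by omega
  have h0 : List.range 1 = [0] := rfl
  simp [this, h0]

lemma Mmat_update (A : ℕ → Matrix (Fin n) (Fin n) ℝ) (δ : ℕ → ℝ)
    (Q : Matrix (Fin n) (Fin n) ℝ) {i q : ℕ} (h : q ≠ i) (s : ℝ) :
    Mmat A (Function.update δ i s) Q q = Mmat A δ Q q := by
  unfold Mmat
  rw [Function.update_of_ne h]

lemma expM_transpose (B : Matrix (Fin n) (Fin n) ℝ) : (expM B)ᵀ = expM Bᵀ := by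
  rw [expM, expM, Matrix.exp_transpose]

/-- Projecting a matrix-valued derivative to an entry. -/
lemma entry_hasDerivAt {f : ℝ → Matrix (Fin n) (Fin n) ℝ} {D : Matrix (Fin n) (Fin n) ℝ}
    {t : ℝ} (h : HasDerivAt f D t) (k l : Fin n) :
    HasDerivAt (fun s => f s k l) (D k l) t := by
  have hπ : HasFDerivAt (fun M : Matrix (Fin n) (Fin n) ℝ => M k l)
      (LinearMap.toContinuousLinearMap (Matrix.entryLinearMap ℝ ℝ k l)) (f t) :=
    (LinearMap.toContinuousLinearMap (Matrix.entryLinearMap ℝ ℝ k l)).hasFDerivAt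
  exact hπ.comp_hasDerivAt t h

lemma expM_continuous (B : Matrix (Fin n) (Fin n) ℝ) :
    Continuous fun η : ℝ => expM (η • B) := by
  rw [continuous_iff_continuousAt]
  intro t
  exact (hasDerivAt_exp_smul_const (𝕂 := ℝ) B t).continuousAt

end Aux

section Main

attribute [local instance] Matrix.linftyOpNormedRing Matrix.linftyOpNormedAlgebra

/-- the partial derivative of `P_a` with respect to `δ_i` exists (entrywise) at
every nonnegative `δ` and equals `Φ(i+1,a)ᵀ (Q + A_iᵀ P_{i+1} + P_{i+1} A_i) Φ(i+1,a)`. -/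
theorem stmt7 {n N : ℕ} (A : ℕ → Matrix (Fin n) (Fin n) ℝ) (δ : ℕ → ℝ)
    (hδ : ∀ q ≤ N, 0 ≤ δ q) (Q : Matrix (Fin n) (Fin n) ℝ)
    (a i : ℕ) (hai : a ≤ i) (hiN : i ≤ N) :
    ∀ k l : Fin n,
      HasDerivAt (fun s : ℝ => Pmat N A (Function.update δ i s) Q a k l)
        (((Phi A δ (i + 1) a)ᵀ *
            (Q + (A i)ᵀ * Pmat N A δ Q (i + 1) + Pmat N A δ Q (i + 1) * A i) *
            Phi A δ (i + 1) a) k l) (δ i) := by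
  intro k l
  classical
  set Ai := A i with hAi
  set X := Phi A δ i a with hX
  set Φ := Phi A δ (i + 1) a with hΦdef
  have hΦ : Φ = expM (δ i • Ai) * X := by
    rw [hΦdef, Phi_split A δ hai (Nat.le_succ i), Phi_succ, ← hX, ← hAi]
  set G := (expM (δ i • Ai))ᵀ * Q * expM (δ i • Ai) with hG
  set C : ℕ → Matrix (Fin n) (Fin n) ℝ :=
    fun q => (Phi A δ q (i + 1))ᵀ * Mmat A δ Q q * Phi A δ q (i + 1) with hC
  set d : ℕ → ℝ := fun q =>
    if q < i then 0
    else if q = i then (Xᵀ * G * X) k l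
    else (Φᵀ * (Aiᵀ * C q + C q * Ai) * Φ) k l with hd
  -- derivative of the entries of Mmat at index i
  have hM : ∀ u v : Fin n,
      HasDerivAt (fun s => Mmat A (Function.update δ i s) Q i u v) (G u v) (δ i) := by
    intro u v
    have hexpc := expM_continuous Ai
    have hexpcT := expM_continuous Aiᵀ
    have hg : Continuous fun η : ℝ => ((expM (η • Ai))ᵀ * Q * expM (η • Ai)) u v := by
      have hcm : Continuous fun η : ℝ => (expM (η • Ai))ᵀ * Q * expM (η • Ai) := by
        have h1 : (fun η : ℝ => (expM (η • Ai))ᵀ * Q * expM (η • Ai))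
            = fun η : ℝ => expM (η • Aiᵀ) * Q * expM (η • Ai) := by
          funext η
          rw [expM_transpose, transpose_smul]
        rw [h1]
        exact (hexpcT.mul continuous_const).mul hexpc
      exact ((LinearMap.toContinuousLinearMap
        (Matrix.entryLinearMap ℝ ℝ u v)).continuous).comp hcm
    have h := intervalIntegral.integral_hasDerivAt_right
      (hg.intervalIntegrable 0 (δ i))
      (hg.stronglyMeasurableAtFilter _ _) hg.continuousAt
    have heq : (fun s : ℝ => Mmat A (Function.update δ i s) Q i u v)
        = fun s : ℝ => ∫ η in (0:ℝ)..s, ((expM (η • Ai))ᵀ * Q * expM (η • Ai)) u v := by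
      funext s
      simp [Mmat, Function.update_self, hAi]
    rw [heq]
    exact h
  -- per-summand derivatives
  have hterm : ∀ q ∈ Finset.Icc a N,
      HasDerivAt (fun s =>
        ((Phi A (Function.update δ i s) q a)ᵀ * Mmat A (Function.update δ i s) Q q *
          Phi A (Function.update δ i s) q a) k l) (d q) (δ i) := by
    intro q hq
    rw [Finset.mem_Icc] at hq
    rcases lt_trichotomy q i with hqi | hqi | hqi
    · -- q < i : constant
      have heq : (fun s =>
          ((Phi A (Function.update δ i s) q a)ᵀ * Mmat A (Function.update δ i s) Q q *
            Phi A (Function.update δ i s) q a) k l)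
          = fun _ => ((Phi A δ q a)ᵀ * Mmat A δ Q q * Phi A δ q a) k l := by
        funext s
        rw [Phi_update_low A δ i s (le_of_lt hqi), Mmat_update A δ Q (Nat.ne_of_lt hqi)]
      rw [heq, hd]
      simp only [if_pos hqi]
      exact hasDerivAt_const _ _
    · -- q = i : FTC term
      rw [hqi]
      have heq : (fun s =>
          ((Phi A (Function.update δ i s) i a)ᵀ * Mmat A (Function.update δ i s) Q i *
            Phi A (Function.update δ i s) i a) k l)
          = fun s => ∑ v, ∑ u, X u k * Mmat A (Function.update δ i s) Q i u v * X v l := by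
        funext s
        rw [Phi_update_low A δ i s le_rfl, ← hX]
        simp [Matrix.mul_apply, Matrix.transpose_apply, Finset.sum_mul, mul_assoc]
      rw [heq, hd]
      simp only [lt_irrefl, if_neg (lt_irrefl i), if_pos rfl, ↓reduceIte]
      have hexp : (Xᵀ * G * X) k l = ∑ v, ∑ u, X u k * G u v * X v l := by
        simp [Matrix.mul_apply, Matrix.transpose_apply, Finset.sum_mul, mul_assoc]
      rw [hexp]
      apply HasDerivAt.fun_sum
      intro v _
      apply HasDerivAt.fun_sum
      intro u _
      have h := ((hM u v).const_mul (X u k)).mul_const (X v l)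
      simpa [mul_assoc] using h
    · -- q > i
      have hq1 : i + 1 ≤ q := hqi
      set R := Phi A δ q (i + 1) with hR
      set Cq := Rᵀ * Mmat A δ Q q * R with hCq
      have hPhiEq : ∀ s : ℝ, Phi A (Function.update δ i s) q a
          = R * expM (s • Ai) * X := by
        intro s
        rw [Phi_split A (Function.update δ i s) (Nat.le_succ_of_le hai) hq1,
          Phi_split A (Function.update δ i s) hai (Nat.le_succ i),
          Phi_update_high A δ i s (Nat.lt_succ_self i),
          Phi_update_low A δ i s le_rfl, Phi_succ, Function.update_self, ← hX, ← hAi,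
          ← hR, Matrix.mul_assoc]
      have hMq : ∀ s : ℝ, Mmat A (Function.update δ i s) Q q = Mmat A δ Q q :=
        fun s => Mmat_update A δ Q (by omega) s
      have h1 : HasDerivAt (fun s : ℝ => expM (s • Aiᵀ))
          (expM (δ i • Aiᵀ) * Aiᵀ) (δ i) := hasDerivAt_exp_smul_const (𝕂 := ℝ) Aiᵀ (δ i)
      have h2 : HasDerivAt (fun s : ℝ => expM (s • Ai))
          (Ai * expM (δ i • Ai)) (δ i) := hasDerivAt_exp_smul_const' (𝕂 := ℝ) Ai (δ i)
      have hL := h1.const_mul Xᵀ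
      have hRd := (h2.mul_const X).const_mul Cq
      have hF := hL.mul hRd
      have hFe := entry_hasDerivAt hF k l
      have heq : (fun s =>
          ((Phi A (Function.update δ i s) q a)ᵀ * Mmat A (Function.update δ i s) Q q *
            Phi A (Function.update δ i s) q a) k l)
          = fun s => ((Xᵀ * expM (s • Aiᵀ)) * (Cq * (expM (s • Ai) * X))) k l := by
        funext s
        rw [hPhiEq s, hMq s]
        have hT : (expM (s • Ai))ᵀ = expM (s • Aiᵀ) := by
          rw [expM_transpose, transpose_smul]
        rw [hCq]
        simp only [Matrix.transpose_mul, hT, Matrix.mul_assoc]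
      rw [heq, hd]
      have hne1 : ¬ q < i := by omega
      have hne2 : q ≠ i := by omega
      simp only [if_neg hne1, if_neg hne2]
      convert hFe using 1
      · rfl
      have hCqC : C q = Cq := rfl
      have hTd : expM (δ i • Aiᵀ) = (expM (δ i • Ai))ᵀ := by
        rw [expM_transpose, transpose_smul]
      rw [hCqC, hΦ, hTd, hCq]
      simp only [Matrix.transpose_mul, Matrix.add_mul, Matrix.mul_add, Matrix.mul_assoc,
        Matrix.add_apply]
  -- assemble
  have main := HasDerivAt.sum (u := Finset.Icc a N) hterm
  have hfun : (fun s : ℝ => Pmat N A (Function.update δ i s) Q a k l)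
      = fun s => ∑ q ∈ Finset.Icc a N,
          ((Phi A (Function.update δ i s) q a)ᵀ * Mmat A (Function.update δ i s) Q q *
            Phi A (Function.update δ i s) q a) k l := by
    funext s
    rw [Pmat, Matrix.sum_apply]
  rw [hfun]
  convert main using 1
  · rfl
  · rfl
  · exact (Finset.sum_fn _ _).symm
  have hsplit : Finset.Icc a N = Finset.Icc a i ∪ Finset.Ioc i N := by
    ext q
    simp only [Finset.mem_Icc, Finset.mem_union, Finset.mem_Ioc]
    omega
  have hdisj : Disjoint (Finset.Icc a i) (Finset.Ioc i N) := by
    rw [Finset.disjoint_left]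
    intro q h1 h2
    simp only [Finset.mem_Icc] at h1
    simp only [Finset.mem_Ioc] at h2
    omega
  rw [hsplit, Finset.sum_union hdisj]
  have hsum1 : ∑ q ∈ Finset.Icc a i, d q = (Xᵀ * G * X) k l := by
    have h0 : ∀ q ∈ Finset.Icc a i, q ≠ i → d q = 0 := by
      intro q hq hne
      rw [Finset.mem_Icc] at hq
      simp [hd, show q < i by omega]
    rw [Finset.sum_eq_single_of_mem i (Finset.mem_Icc.2 ⟨hai, le_rfl⟩) h0]
    simp [hd]
  have hP : Pmat N A δ Q (i + 1) = ∑ q ∈ Finset.Ioc i N, C q := by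
    rw [Pmat, ← Finset.Icc_add_one_left_eq_Ioc]
  have hsum2 : ∑ q ∈ Finset.Ioc i N, d q
      = (Φᵀ * (Aiᵀ * Pmat N A δ Q (i + 1) + Pmat N A δ Q (i + 1) * Ai) * Φ) k l := by
    have hdq : ∀ q ∈ Finset.Ioc i N, d q = (Φᵀ * (Aiᵀ * C q + C q * Ai) * Φ) k l := by
      intro q hq
      rw [Finset.mem_Ioc] at hq
      simp [hd, show ¬ q < i by omega, show q ≠ i by omega]
    rw [Finset.sum_congr rfl hdq, hP, Finset.mul_sum, Finset.sum_mul,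
      ← Finset.sum_add_distrib, Finset.mul_sum, Finset.sum_mul, Matrix.sum_apply]
  rw [hsum1, hsum2]
  have hQt : (Xᵀ * G * X) k l = (Φᵀ * Q * Φ) k l := by
    rw [hΦ, hG]
    simp [Matrix.transpose_mul, Matrix.mul_assoc]
  rw [hQt]
  simp only [Matrix.add_mul, Matrix.mul_add, Matrix.add_apply, Matrix.mul_assoc]
  ring

end Main
end

section
/- Fix E ∈ ℝ^{n×n} and indices 0 ≤ a ≤ i ≤ N, and regard F_a as a function of δ ∈ ℝ^{N+1} through the defining formula. Then the partial derivative of F_a with respect to δ_i exists at every δ with nonnegative entries and equals Φ(i+1, a)ᵀ (A_iᵀ F_{i+1} + F_{i+1} A_i) Φ(i+1, a), where Φ(i+1, a) and F_{i+1} are evaluated at δ. -/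
open Matrix

lemma phi_self {n : ℕ} (A : ℕ → Matrix (Fin n) (Fin n) ℝ) (δ : ℕ → ℝ) (a : ℕ) :
    Phi A δ a a = 1 := by simp [Phi]

lemma phi_succ {n : ℕ} (A : ℕ → Matrix (Fin n) (Fin n) ℝ) (δ : ℕ → ℝ) {a l : ℕ}
    (h : a ≤ l) : Phi A δ (l + 1) a = expM (δ l • A l) * Phi A δ l a := by
  have h1 : l + 1 - a = (l - a) + 1 := by omega
  have h2 : a + (l - a) = l := by omega
  simp [Phi, h1, List.range_succ, h2]

lemma phi_split {n : ℕ} (A : ℕ → Matrix (Fin n) (Fin n) ℝ) (δ : ℕ → ℝ) {a m l : ℕ}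
    (ham : a ≤ m) (hml : m ≤ l) : Phi A δ l a = Phi A δ l m * Phi A δ m a := by
  induction l, hml using Nat.le_induction with
  | base => simp [phi_self]
  | succ l hml ih =>
      rw [phi_succ A δ (ham.trans hml), phi_succ A δ hml, ih, mul_assoc]

lemma phi_congr {n : ℕ} (A : ℕ → Matrix (Fin n) (Fin n) ℝ) {δ δ' : ℕ → ℝ} {a : ℕ} (l : ℕ)
    (h : ∀ j, a ≤ j → j < l → δ j = δ' j) : Phi A δ l a = Phi A δ' l a := by
  induction l with
  | zero => simp [Phi]
  | succ l ih =>
      by_cases hal : a ≤ l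
      · rw [phi_succ A δ hal, phi_succ A δ' hal, h l hal (Nat.lt_succ_self l),
          ih (fun j hj hjl => h j hj (hjl.trans (Nat.lt_succ_self l)))]
      · have : l + 1 - a = 0 := by omega
        simp [Phi, this]

attribute [local instance] Matrix.linftyOpNormedAddCommGroup Matrix.linftyOpNormedSpace
  Matrix.linftyOpNormedRing Matrix.linftyOpNormedAlgebra

/-- the partial derivative of `F_a` with respect to `δ_i` exists (entrywise) at
every nonnegative `δ` and equals `Φ(i+1,a)ᵀ (A_iᵀ F_{i+1} + F_{i+1} A_i) Φ(i+1,a)`. -/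
theorem stmt8 {n N : ℕ} (A : ℕ → Matrix (Fin n) (Fin n) ℝ) (δ : ℕ → ℝ)
    (hδ : ∀ q ≤ N, 0 ≤ δ q) (E : Matrix (Fin n) (Fin n) ℝ)
    (a i : ℕ) (hai : a ≤ i) (hiN : i ≤ N) :
    ∀ k l : Fin n,
      HasDerivAt (fun s : ℝ => Fmat N A (Function.update δ i s) E a k l)
        (((Phi A δ (i + 1) a)ᵀ *
            ((A i)ᵀ * Fmat N A δ E (i + 1) + Fmat N A δ E (i + 1) * A i) *
            Phi A δ (i + 1) a) k l) (δ i) := by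
  intro k l
  set C := Phi A δ i a with hC
  set D := Phi A δ (N + 1) (i + 1) with hD
  set G := Dᵀ * E * D with hG
  set g : ℝ → Matrix (Fin n) (Fin n) ℝ := fun s => expM (s • A i) with hg
  have key : ∀ s : ℝ, Fmat N A (Function.update δ i s) E a =
      Cᵀ * ((g s)ᵀ * G * g s) * C := by
    intro s
    have h1 : Phi A (Function.update δ i s) (N + 1) a =
        D * (g s * C) := by
      rw [phi_split A _ (hai.trans (Nat.le_succ i)) (by omega : i + 1 ≤ N + 1),
        phi_split A _ hai (Nat.le_succ i), phi_succ A _ (le_refl i), phi_self]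
      congr 1
      · rw [hD]; exact phi_congr A _ (fun j hj _ => Function.update_of_ne (by omega) _ _)
      · rw [mul_one, Function.update_self, hC]
        congr 1
        exact phi_congr A _ (fun j hj hji => Function.update_of_ne (by omega) _ _)
    simp only [Fmat, h1, transpose_mul, hG, mul_assoc]
  have hexp : HasDerivAt g (g (δ i) * A i) (δ i) := hasDerivAt_exp_smul_const (A i) (δ i)
  let Lt : Matrix (Fin n) (Fin n) ℝ →L[ℝ] Matrix (Fin n) (Fin n) ℝ :=
    LinearMap.toContinuousLinearMap
      ((Matrix.transposeLinearEquiv (Fin n) (Fin n) ℝ ℝ).toLinearMap)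
  have hexpT : HasDerivAt (fun s => (g s)ᵀ) ((g (δ i) * A i)ᵀ) (δ i) := by
    have := Lt.hasFDerivAt.comp_hasDerivAt (δ i) hexp
    exact this
  have h1 : HasDerivAt (fun s => (g s)ᵀ * G) ((g (δ i) * A i)ᵀ * G) (δ i) :=
    hexpT.mul_const G
  have h2 : HasDerivAt (fun s => (g s)ᵀ * G * g s)
      ((g (δ i) * A i)ᵀ * G * g (δ i) + (g (δ i))ᵀ * G * (g (δ i) * A i)) (δ i) := h1.mul hexp
  have h3 : HasDerivAt (fun s => Cᵀ * ((g s)ᵀ * G * g s) * C)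
      (Cᵀ * ((g (δ i) * A i)ᵀ * G * g (δ i) + (g (δ i))ᵀ * G * (g (δ i) * A i)) * C)
      (δ i) := (h2.const_mul Cᵀ).mul_const C
  let Le : Matrix (Fin n) (Fin n) ℝ →L[ℝ] ℝ :=
    LinearMap.toContinuousLinearMap (Matrix.entryLinearMap ℝ ℝ k l)
  have h4 := Le.hasFDerivAt.comp_hasDerivAt (δ i) h3
  have heq : (fun s : ℝ => Fmat N A (Function.update δ i s) E a k l) =
      fun s => Le (Cᵀ * ((g s)ᵀ * G * g s) * C) := by
    funext s; rw [key s]; rfl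
  rw [heq]
  convert h4 using 1
  rotate_left 3
  have hcomm : g (δ i) * A i = A i * g (δ i) :=
    (((Commute.refl (A i)).smul_left (δ i)).exp_left).eq
  have hPhi : Phi A δ (i + 1) a = g (δ i) * C := by
    rw [phi_succ A δ hai]
  have hF : Fmat N A δ E (i + 1) = G := rfl
  have hM : (Phi A δ (i + 1) a)ᵀ *
      ((A i)ᵀ * Fmat N A δ E (i + 1) + Fmat N A δ E (i + 1) * A i) *
      Phi A δ (i + 1) a
      = Cᵀ * ((g (δ i) * A i)ᵀ * G * g (δ i) + (g (δ i))ᵀ * G * (g (δ i) * A i)) * C := by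
    rw [hPhi, hF, hcomm]
    simp only [transpose_mul, mul_add, add_mul, mul_assoc]
  rw [hM]
  rfl
  all_goals rfl
end

section
/- (Block matrix exponential identity used in the algorithm, Eq. (26)–(29).) Let A, Q ∈ ℝ^{n×n} and δ ∈ ℝ with δ ≥ 0. Let G be the 2n×2n block matrix G = [[−Aᵀ, Q], [0, A]] and write Z = exp(δ G) in n×n blocks as Z = [[Z₁, Z₂], [Z₂₁, Z₃]]. Then Z₂₁ = 0, Z₁ = exp(−δ Aᵀ), Z₃ = exp(δ A), and Z₃ᵀ Z₂ = ∫_0^δ exp(η A)ᵀ Q exp(η A) dη. -/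
open Matrix

section AuxStmt12
open NormedSpace
variable {n : ℕ}

private lemma pow_upperBlocks (B C D : Matrix (Fin n) (Fin n) ℝ) (k : ℕ) :
    ∃ C', (fromBlocks B C 0 D) ^ k = fromBlocks (B ^ k) C' 0 (D ^ k) := by
  induction k with
  | zero => exact ⟨0, by simp [← Matrix.fromBlocks_one]⟩
  | succ k ih =>
    obtain ⟨C', hC⟩ := ih
    refine ⟨B ^ k * C + C' * D, ?_⟩
    rw [pow_succ, hC, Matrix.fromBlocks_multiply]
    simp [pow_succ]

private lemma exp_upperBlocks (B C D : Matrix (Fin n) (Fin n) ℝ) :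
    (exp (fromBlocks B C 0 D)).toBlocks₁₁ = exp B ∧
    (exp (fromBlocks B C 0 D)).toBlocks₂₁ = 0 ∧
    (exp (fromBlocks B C 0 D)).toBlocks₂₂ = exp D := by
  letI : SeminormedRing (Matrix (Fin n ⊕ Fin n) (Fin n ⊕ Fin n) ℝ) := Matrix.linftyOpSemiNormedRing
  letI : NormedRing (Matrix (Fin n ⊕ Fin n) (Fin n ⊕ Fin n) ℝ) := Matrix.linftyOpNormedRing
  letI : NormedAlgebra ℝ (Matrix (Fin n ⊕ Fin n) (Fin n ⊕ Fin n) ℝ) := Matrix.linftyOpNormedAlgebra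
  letI : NormedAddCommGroup (Matrix (Fin n) (Fin n) ℝ) := Matrix.linftyOpNormedAddCommGroup
  letI : NormedSpace ℝ (Matrix (Fin n) (Fin n) ℝ) := Matrix.linftyOpNormedSpace
  set G := fromBlocks B C 0 D with hG
  have hsum : Summable fun k : ℕ => ((k.factorial : ℝ))⁻¹ • G ^ k := expSeries_summable' (𝕂 := ℝ) G
  choose Ck hCk using pow_upperBlocks B C D
  let L11 : Matrix (Fin n ⊕ Fin n) (Fin n ⊕ Fin n) ℝ →ₗ[ℝ] Matrix (Fin n) (Fin n) ℝ :=
    { toFun := Matrix.toBlocks₁₁, map_add' := fun _ _ => rfl, map_smul' := fun _ _ => rfl }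
  let L21 : Matrix (Fin n ⊕ Fin n) (Fin n ⊕ Fin n) ℝ →ₗ[ℝ] Matrix (Fin n) (Fin n) ℝ :=
    { toFun := Matrix.toBlocks₂₁, map_add' := fun _ _ => rfl, map_smul' := fun _ _ => rfl }
  let L22 : Matrix (Fin n ⊕ Fin n) (Fin n ⊕ Fin n) ℝ →ₗ[ℝ] Matrix (Fin n) (Fin n) ℝ :=
    { toFun := Matrix.toBlocks₂₂, map_add' := fun _ _ => rfl, map_smul' := fun _ _ => rfl }
  have hexp : exp G = ∑' k : ℕ, ((k.factorial : ℝ))⁻¹ • G ^ k := by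
    rw [exp_eq_tsum (𝕂 := ℝ)]
  refine ⟨?_, ?_, ?_⟩
  · have h := (L11.toContinuousLinearMap).map_tsum hsum
    have : (exp G).toBlocks₁₁ = ∑' k : ℕ, ((k.factorial : ℝ))⁻¹ • (G ^ k).toBlocks₁₁ := by
      rw [hexp]; exact h
    rw [this, exp_eq_tsum (𝕂 := ℝ)]
    congr 1; funext k; rw [hCk k, toBlocks_fromBlocks₁₁]
  · have h := (L21.toContinuousLinearMap).map_tsum hsum
    have : (exp G).toBlocks₂₁ = ∑' k : ℕ, ((k.factorial : ℝ))⁻¹ • (G ^ k).toBlocks₂₁ := by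
      rw [hexp]; exact h
    rw [this]
    simp only [hG, hCk, toBlocks_fromBlocks₂₁, smul_zero, tsum_zero]
  · have h := (L22.toContinuousLinearMap).map_tsum hsum
    have : (exp G).toBlocks₂₂ = ∑' k : ℕ, ((k.factorial : ℝ))⁻¹ • (G ^ k).toBlocks₂₂ := by
      rw [hexp]; exact h
    rw [this, exp_eq_tsum (𝕂 := ℝ)]
    congr 1; funext k; rw [hCk k, toBlocks_fromBlocks₂₂]

private lemma key_integral (A Q : Matrix (Fin n) (Fin n) ℝ) (δ : ℝ) :
    exp (δ • Aᵀ) * (exp (δ • fromBlocks (-Aᵀ) Q 0 A)).toBlocks₁₂ =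
      Matrix.of fun k l => ∫ η in (0:ℝ)..δ,
        (exp (η • Aᵀ) * Q * exp (η • A)) k l := by
  letI : SeminormedRing (Matrix (Fin n ⊕ Fin n) (Fin n ⊕ Fin n) ℝ) := Matrix.linftyOpSemiNormedRing
  letI : NormedRing (Matrix (Fin n ⊕ Fin n) (Fin n ⊕ Fin n) ℝ) := Matrix.linftyOpNormedRing
  letI : NormedAlgebra ℝ (Matrix (Fin n ⊕ Fin n) (Fin n ⊕ Fin n) ℝ) := Matrix.linftyOpNormedAlgebra
  letI : SeminormedRing (Matrix (Fin n) (Fin n) ℝ) := Matrix.linftyOpSemiNormedRing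
  letI : NormedRing (Matrix (Fin n) (Fin n) ℝ) := Matrix.linftyOpNormedRing
  letI : NormedAlgebra ℝ (Matrix (Fin n) (Fin n) ℝ) := Matrix.linftyOpNormedAlgebra
  set G := fromBlocks (-Aᵀ) Q 0 A with hG
  set f : ℝ → Matrix (Fin n) (Fin n) ℝ :=
    fun s => exp (s • Aᵀ) * (exp (s • G)).toBlocks₁₂ with hf
  let L12 : Matrix (Fin n ⊕ Fin n) (Fin n ⊕ Fin n) ℝ →ₗ[ℝ] Matrix (Fin n) (Fin n) ℝ :=
    { toFun := Matrix.toBlocks₁₂, map_add' := fun _ _ => rfl, map_smul' := fun _ _ => rfl }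
  have hderiv : ∀ t : ℝ, HasDerivAt f (exp (t • Aᵀ) * Q * exp (t • A)) t := by
    intro t
    have h1 : HasDerivAt (fun s : ℝ => exp (s • Aᵀ)) (exp (t • Aᵀ) * Aᵀ) t :=
      hasDerivAt_exp_smul_const Aᵀ t
    have h2 : HasDerivAt (fun s : ℝ => exp (s • G)) (G * exp (t • G)) t :=
      hasDerivAt_exp_smul_const' G t
    have h3 : HasDerivAt (fun s : ℝ => (exp (s • G)).toBlocks₁₂)
        ((G * exp (t • G)).toBlocks₁₂) t :=
      (L12.toContinuousLinearMap.hasFDerivAt.comp_hasDerivAt t h2)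
    have h4 := h1.mul h3
    convert h4 using 1
    · rfl
    · rfl
    · rfl
    · rfl
    have hZ : exp (t • G) =
        fromBlocks (exp (t • G)).toBlocks₁₁ (exp (t • G)).toBlocks₁₂
          (exp (t • G)).toBlocks₂₁ (exp (t • G)).toBlocks₂₂ :=
      (fromBlocks_toBlocks _).symm
    have h22 : (exp (t • G)).toBlocks₂₂ = exp (t • A) := by
      rw [hG, Matrix.fromBlocks_smul, smul_zero]
      exact (exp_upperBlocks _ _ _).2.2
    have hmul : (G * exp (t • G)).toBlocks₁₂ =
        (-Aᵀ) * (exp (t • G)).toBlocks₁₂ + Q * exp (t • A) := by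
      conv_lhs => rw [hZ, hG, Matrix.fromBlocks_multiply]
      rw [toBlocks_fromBlocks₁₂, h22]
    rw [hmul, mul_add, neg_mul, mul_neg, ← mul_assoc, ← mul_assoc, add_neg_cancel_left]
  have hf0 : f 0 = 0 := by
    simp only [hf, zero_smul, exp_zero]
    rw [← Matrix.fromBlocks_one, toBlocks_fromBlocks₁₂, mul_zero]
  have hcontE : Continuous fun t : ℝ => exp (t • Aᵀ) :=
    Differentiable.continuous (fun t : ℝ => (hasDerivAt_exp_smul_const Aᵀ t).differentiableAt)
  have hcontX : Continuous fun t : ℝ => exp (t • A) :=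
    Differentiable.continuous (fun t : ℝ => (hasDerivAt_exp_smul_const A t).differentiableAt)
  have hcont : Continuous fun t : ℝ => exp (t • Aᵀ) * Q * exp (t • A) :=
    (hcontE.mul continuous_const).mul hcontX
  ext k l
  let Ekl : Matrix (Fin n) (Fin n) ℝ →ₗ[ℝ] ℝ :=
    { toFun := fun M => M k l, map_add' := fun _ _ => rfl, map_smul' := fun _ _ => rfl }
  have hinteq : ∫ η in (0:ℝ)..δ, (exp (η • Aᵀ) * Q * exp (η • A)) k l =
      f δ k l - f 0 k l := by
    apply intervalIntegral.integral_eq_sub_of_hasDerivAt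
    · intro t _
      exact Ekl.toContinuousLinearMap.hasFDerivAt.comp_hasDerivAt t (hderiv t)
    · exact ((Ekl.toContinuousLinearMap.continuous.comp hcont)).intervalIntegrable _ _
  rw [Matrix.of_apply, hinteq, hf0]
  simp
  rfl

end AuxStmt12

/-- block matrix exponential identity, Eq. (26)–(29): with
`G = [[−Aᵀ, Q], [0, A]]` and `Z = exp(δ G)` written in `n×n` blocks, we have `Z₂₁ = 0`,
`Z₁ = exp(−δ Aᵀ)`, `Z₃ = exp(δ A)` and `Z₃ᵀ Z₂ = ∫_0^δ exp(η A)ᵀ Q exp(η A) dη`. -/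
theorem stmt12 {n : ℕ} (A Q : Matrix (Fin n) (Fin n) ℝ) (δ : ℝ) (hδ : 0 ≤ δ) :
    (NormedSpace.exp (δ • Matrix.fromBlocks (-Aᵀ) Q 0 A)).toBlocks₂₁ = 0 ∧
    (NormedSpace.exp (δ • Matrix.fromBlocks (-Aᵀ) Q 0 A)).toBlocks₁₁ = expM ((-δ) • Aᵀ) ∧
    (NormedSpace.exp (δ • Matrix.fromBlocks (-Aᵀ) Q 0 A)).toBlocks₂₂ = expM (δ • A) ∧
    ((NormedSpace.exp (δ • Matrix.fromBlocks (-Aᵀ) Q 0 A)).toBlocks₂₂)ᵀ *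
        (NormedSpace.exp (δ • Matrix.fromBlocks (-Aᵀ) Q 0 A)).toBlocks₁₂ =
      Matrix.of fun k l => ∫ η in (0:ℝ)..δ, ((expM (η • A))ᵀ * Q * expM (η • A)) k l := by
  set G := Matrix.fromBlocks (-Aᵀ) Q 0 A with hG
  have hsm : δ • G = fromBlocks (δ • (-Aᵀ)) (δ • Q) 0 (δ • A) := by
    rw [hG, Matrix.fromBlocks_smul, smul_zero]
  obtain ⟨h11, h21, h22⟩ := exp_upperBlocks (δ • (-Aᵀ)) (δ • Q) (δ • A)
  refine ⟨?_, ?_, ?_, ?_⟩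
  · rw [hsm]; exact h21
  · rw [hsm, h11]
    show _ = NormedSpace.exp ((-δ) • Aᵀ)
    congr 1
    rw [neg_smul, smul_neg]
  · rw [hsm, h22]; rfl
  · have hZ22 : (NormedSpace.exp (δ • G)).toBlocks₂₂ = NormedSpace.exp (δ • A) := by
      rw [hsm]; exact h22
    rw [hZ22, ← Matrix.exp_transpose, Matrix.transpose_smul]
    have hint := key_integral A Q δ
    simp only [expM, ← Matrix.exp_transpose, Matrix.transpose_smul]
    exact hint
end
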